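/- Let l ≥ 4 and let H be a disjoint union of paths containing three vertex-disjoint paths of orders l−1, a, and l−2−a for some a with ⌈l/2⌉−1 ≤ a ≤ l−3. Then K_2 + H contains C_{l,l} as a subgraph. -/

import Mathlib

open SimpleGraph

/-- The adjacency spectral radius of a finite simple graph. -/
noncomputable def specRad {V : Type*} [Fintype V] [DecidableEq V] (G : SimpleGraph V) : ℝ :=
  letI := Classical.decRel G.Adj
  sSup ((fun μ : ℝ => |μ|) '' spectrum ℝ (G.adjMatrix ℝ))

/-- `G` contains a copy of `H` as a subgraph. -/
def Contains {V W : Type*} (G : SimpleGraph V) (H : SimpleGraph W) : Prop :=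
  ∃ f : W ↪ V, ∀ a b, H.Adj a b → G.Adj (f a) (f b)

/-- `G` contains `C_{l,l}`: two cycles of length `l` sharing exactly one vertex. -/
def ContainsCll {V : Type*} (G : SimpleGraph V) (l : ℕ) : Prop :=
  ∃ (u : V) (c₁ c₂ : G.Walk u u), c₁.IsCycle ∧ c₂.IsCycle ∧ c₁.length = l ∧ c₂.length = l ∧
    ∀ v, v ∈ c₁.support → v ∈ c₂.support → v = u

/-- Theta graph on `k` vertices: the cycle `0,1,…,k-1` plus a chord from `0` to `a`. -/
def thetaGraph (k a : ℕ) : SimpleGraph (Fin k) :=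
  SimpleGraph.fromRel (fun i j =>
    (j : ℕ) = (i : ℕ) + 1 ∨ ((i : ℕ) = k - 1 ∧ (j : ℕ) = 0) ∨ ((i : ℕ) = 0 ∧ (j : ℕ) = a))

/-- `G` contains some member of `Θ_k`, the set of Theta graphs on `k` vertices. -/
def ContainsTheta {V : Type*} (G : SimpleGraph V) (k : ℕ) : Prop :=
  ∃ a, 2 ≤ a ∧ a ≤ k - 2 ∧ Contains G (thetaGraph k a)

/-- The join of two graphs: all edges between the two vertex sets are added. -/
def joinG {V W : Type*} (G : SimpleGraph V) (H : SimpleGraph W) : SimpleGraph (V ⊕ W) where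
  Adj a b := match a, b with
    | Sum.inl a, Sum.inl b => G.Adj a b
    | Sum.inr a, Sum.inr b => H.Adj a b
    | Sum.inl _, Sum.inr _ => True
    | Sum.inr _, Sum.inl _ => True
  symm := ⟨by
    rintro (a | a) (b | b) h
    · exact G.adj_symm h
    · trivial
    · trivial
    · exact H.adj_symm h⟩
  loopless := ⟨by
    rintro (a | a) h
    · exact G.irrefl h
    · exact H.irrefl h⟩

/-- The disjoint union of `t` paths, the `i`-th having `f i` vertices. -/
def pathsUnion (t : ℕ) (f : ℕ → ℕ) : SimpleGraph (Σ i : Fin t, Fin (f i.1)) where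
  Adj a b := a.1 = b.1 ∧ ((a.2 : ℕ) + 1 = (b.2 : ℕ) ∨ (b.2 : ℕ) + 1 = (a.2 : ℕ))
  symm := ⟨by
    rintro ⟨i, a⟩ ⟨j, b⟩ ⟨h₁, h₂⟩
    exact ⟨h₁.symm, h₂.symm⟩⟩
  loopless := ⟨by
    rintro ⟨i, a⟩ ⟨-, h⟩
    omega⟩

/-- `H` is a minor of `G`: disjoint connected branch sets, one for each vertex of `H`,
with edges of `G` between branch sets corresponding to edges of `H`. -/
def IsMinor {V W : Type*} (H : SimpleGraph W) (G : SimpleGraph V) : Prop :=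
  ∃ B : W → Set V, (∀ w, (B w).Nonempty) ∧ (∀ w, (G.induce (B w)).Connected) ∧
    (∀ w₁ w₂, w₁ ≠ w₂ → Disjoint (B w₁) (B w₂)) ∧
    ∀ w₁ w₂, H.Adj w₁ w₂ → ∃ v₁ ∈ B w₁, ∃ v₂ ∈ B w₂, G.Adj v₁ v₂

/-- Planarity via Wagner's theorem: no `K₅` minor and no `K₃,₃` minor. -/
def IsPlanar {V : Type*} (G : SimpleGraph V) : Prop :=
  ¬ IsMinor (⊤ : SimpleGraph (Fin 5)) G ∧
  ¬ IsMinor (completeBipartiteGraph (Fin 3) (Fin 3)) G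

lemma walkOfFun {V : Type*} (G : SimpleGraph V) :
    ∀ (n : ℕ) (q : ℕ → V), (∀ k, k < n → G.Adj (q k) (q (k+1))) →
    ∃ w : G.Walk (q 0) (q n), w.length = n ∧ w.support = (List.range (n+1)).map q ∧
      w.edges = (List.range n).map (fun k => s(q k, q (k+1))) := by
  intro n
  induction n with
  | zero => intro q _; exact ⟨Walk.nil, by simp [List.range_succ]⟩
  | succ n ih =>
    intro q hadj
    obtain ⟨w, hlen, hsup, hedg⟩ := ih q (fun k hk => hadj k (by omega))
    refine ⟨w.concat (hadj n (by omega)), by simp [hlen], ?_, ?_⟩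
    · simp [hsup, List.range_succ, List.concat_eq_append]
    · simp [hedg, List.range_succ, List.concat_eq_append]

lemma cycleOfFun {V : Type*} (G : SimpleGraph V) (n : ℕ) (hn : 3 ≤ n) (q : ℕ → V)
    (hadj : ∀ k, k + 1 < n → G.Adj (q k) (q (k+1)))
    (hlast : G.Adj (q (n-1)) (q 0))
    (hinj : ∀ i, i < n → ∀ j, j < n → q i = q j → i = j) :
    ∃ c : G.Walk (q 0) (q 0), c.IsCycle ∧ c.length = n ∧
      ∀ v ∈ c.support, ∃ k, k < n ∧ v = q k := by
  obtain ⟨w, hlen, hsup, hedg⟩ := walkOfFun G (n-1) q (fun k hk => hadj k (by omega))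
  have hpath : w.IsPath := by
    rw [Walk.isPath_def, hsup]
    refine List.Nodup.map_on ?_ List.nodup_range
    intro x hx y hy hxy
    rw [List.mem_range] at hx hy
    exact hinj x (by omega) y (by omega) hxy
  refine ⟨Walk.cons hlast.symm w.reverse, ?_, ?_, ?_⟩
  · rw [Walk.cons_isCycle_iff]
    refine ⟨hpath.reverse, ?_⟩
    rw [Walk.edges_reverse, List.mem_reverse, hedg, List.mem_map]
    rintro ⟨k, hk, hke⟩
    rw [List.mem_range] at hk
    rw [Sym2.eq_iff] at hke
    rcases hke with ⟨h1, h2⟩ | ⟨h1, h2⟩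
    · have := hinj k (by omega) 0 (by omega) h1
      have := hinj (k+1) (by omega) (n-1) (by omega) h2
      omega
    · have := hinj k (by omega) (n-1) (by omega) h1
      omega
  · simp [hlen]; omega
  · intro v hv
    rw [Walk.support_cons] at hv
    rcases List.mem_cons.mp hv with h | h
    · exact ⟨0, by omega, h⟩
    · rw [Walk.support_reverse, List.mem_reverse, hsup, List.mem_map] at h
      obtain ⟨k, hk, rfl⟩ := h
      rw [List.mem_range] at hk
      exact ⟨k, by omega, rfl⟩

theorem stmt19 (l t a : ℕ) (hl : 4 ≤ l) (f : ℕ → ℕ) (hf : Antitone f)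
    (ha1 : (l + 1) / 2 - 1 ≤ a) (ha2 : a ≤ l - 3)
    (hcont : Contains (pathsUnion t f)
      (pathsUnion 3 (fun i => if i = 0 then l - 1 else if i = 1 then a else l - 2 - a))) :
    ContainsCll (joinG (⊤ : SimpleGraph (Fin 2)) (pathsUnion t f)) l := by
  obtain ⟨e, he⟩ := hcont
  have ha0 : 1 ≤ a := by omega
  have hb0 : 1 ≤ l - 2 - a := by omega
  have hl1 : 0 < l - 1 := by omega
  set G := joinG (⊤ : SimpleGraph (Fin 2)) (pathsUnion t f) with hG
  set p0 : ℕ → (Σ i : Fin 3, Fin ((fun i => if i = 0 then l - 1 else if i = 1 then a else l - 2 - a) i.1)) :=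
    fun k => ⟨(0 : Fin 3), ⟨k % (l-1), by simpa using Nat.mod_lt k hl1⟩⟩ with hp0
  set p1 : ℕ → (Σ i : Fin 3, Fin ((fun i => if i = 0 then l - 1 else if i = 1 then a else l - 2 - a) i.1)) :=
    fun k => ⟨(1 : Fin 3), ⟨k % a, by simpa using Nat.mod_lt k (by omega)⟩⟩ with hp1
  set p2 : ℕ → (Σ i : Fin 3, Fin ((fun i => if i = 0 then l - 1 else if i = 1 then a else l - 2 - a) i.1)) :=
    fun k => ⟨(2 : Fin 3), ⟨k % (l-2-a), by simpa using Nat.mod_lt k (by omega)⟩⟩ with hp2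
  set q1 : ℕ → (Fin 2 ⊕ Σ i : Fin t, Fin (f i.1)) :=
    fun k => if k = 0 then Sum.inl 0 else Sum.inr (e (p0 (k-1))) with hq1
  set q2 : ℕ → (Fin 2 ⊕ Σ i : Fin t, Fin (f i.1)) :=
    fun k => if k = 0 then Sum.inl 0 else if k ≤ a then Sum.inr (e (p1 (k-1)))
      else if k = a + 1 then Sum.inl 1 else Sum.inr (e (p2 (k-a-2))) with hq2
  have hmod1 : ∀ x y, x < l-1 → y < l-1 → p0 x = p0 y → x = y := by
    intro x y hx hy h
    simp only [hp0] at h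
    simp only [Sigma.mk.inj_iff, heq_eq_eq, Fin.mk.injEq] at h
    rw [Nat.mod_eq_of_lt hx, Nat.mod_eq_of_lt hy] at h
    exact h.2
  have hmod2 : ∀ x y, x < a → y < a → p1 x = p1 y → x = y := by
    intro x y hx hy h
    simp only [hp1] at h
    simp only [Sigma.mk.inj_iff, heq_eq_eq, Fin.mk.injEq] at h
    rw [Nat.mod_eq_of_lt hx, Nat.mod_eq_of_lt hy] at h
    exact h.2
  have hmod3 : ∀ x y, x < l-2-a → y < l-2-a → p2 x = p2 y → x = y := by
    intro x y hx hy h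
    simp only [hp2] at h
    simp only [Sigma.mk.inj_iff, heq_eq_eq, Fin.mk.injEq] at h
    rw [Nat.mod_eq_of_lt hx, Nat.mod_eq_of_lt hy] at h
    exact h.2
  -- cycle 1
  obtain ⟨c1, hc1, hlen1, hsup1⟩ := cycleOfFun G l (by omega) q1
    (by
      intro k hk
      simp only [hq1]
      rcases Nat.eq_zero_or_pos k with rfl | hk0
      · simp only [if_pos rfl, if_neg (by omega : ¬ (0:ℕ)+1 = 0)]
        exact trivial
      · simp only [if_neg (by omega : ¬ k = 0), if_neg (by omega : ¬ k+1 = 0)]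
        refine he _ _ ?_
        simp only [hp0]
        refine ⟨rfl, Or.inl ?_⟩
        simp only
        rw [Nat.mod_eq_of_lt (by omega), Nat.mod_eq_of_lt (by omega)]
        omega)
    (by
      simp only [hq1]
      simp only [if_neg (by omega : ¬ l-1 = 0), if_pos rfl]
      exact trivial)
    (by
      intro i hi j hj h
      simp only [hq1] at h
      by_cases hi0 : i = 0 <;> by_cases hj0 : j = 0
      · omega
      · rw [if_pos hi0, if_neg hj0] at h; simp at h
      · rw [if_neg hi0, if_pos hj0] at h; simp at h
      · rw [if_neg hi0, if_neg hj0] at h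
        simp only [Sum.inr.injEq] at h
        have := hmod1 (i-1) (j-1) (by omega) (by omega) (e.injective h)
        omega)
  -- cycle 2
  obtain ⟨c2, hc2, hlen2, hsup2⟩ := cycleOfFun G l (by omega) q2
    (by
      intro k hk
      simp only [hq2]
      rcases Nat.eq_zero_or_pos k with rfl | hk0
      · simp only [if_pos rfl, if_neg (by omega : ¬ (0:ℕ)+1 = 0), if_pos (by omega : 0+1 ≤ a)]
        exact trivial
      by_cases hka : k + 1 ≤ a
      · simp only [if_neg (by omega : ¬ k = 0), if_neg (by omega : ¬ k+1 = 0),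
          if_pos (by omega : k ≤ a), if_pos hka]
        refine he _ _ ?_
        simp only [hp1]
        refine ⟨rfl, Or.inl ?_⟩
        simp only
        rw [Nat.mod_eq_of_lt (by omega), Nat.mod_eq_of_lt (by omega)]
        omega
      by_cases hke : k = a
      · simp only [if_neg (by omega : ¬ k = 0), if_neg (by omega : ¬ k+1 = 0),
          if_pos (by omega : k ≤ a), if_neg (by omega : ¬ k + 1 ≤ a),
          if_pos (by omega : k + 1 = a + 1)]
        exact trivial
      by_cases hke2 : k = a + 1
      · simp only [if_neg (by omega : ¬ k = 0), if_neg (by omega : ¬ k+1 = 0),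
          if_neg (by omega : ¬ k ≤ a), if_neg (by omega : ¬ k + 1 ≤ a),
          if_pos hke2, if_neg (by omega : ¬ k + 1 = a + 1)]
        exact trivial
      · simp only [if_neg (by omega : ¬ k = 0), if_neg (by omega : ¬ k+1 = 0),
          if_neg (by omega : ¬ k ≤ a), if_neg (by omega : ¬ k + 1 ≤ a),
          if_neg (by omega : ¬ k = a + 1), if_neg (by omega : ¬ k + 1 = a + 1)]
        refine he _ _ ?_
        simp only [hp2]
        refine ⟨rfl, Or.inl ?_⟩
        simp only
        rw [Nat.mod_eq_of_lt (by omega), Nat.mod_eq_of_lt (by omega)]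
        omega)
    (by
      simp only [hq2]
      simp only [if_neg (by omega : ¬ l-1 = 0), if_neg (by omega : ¬ l-1 ≤ a),
        if_neg (by omega : ¬ l-1 = a+1), if_pos rfl]
      exact trivial)
    (by
      intro i hi j hj h
      simp only [hq2] at h
      have hdisj12 : ∀ x y, ¬ (p1 x = p2 y) := by
        intro x y hxy
        simp only [hp1, hp2] at hxy
        simp only [Sigma.mk.inj_iff] at hxy
        exact absurd hxy.1 (by decide)
      by_cases hi0 : i = 0 <;> by_cases hj0 : j = 0
      · omega
      all_goals (try (rw [if_pos hi0] at h)); (try (rw [if_neg hi0] at h))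
      all_goals (try (rw [if_pos hj0] at h)); (try (rw [if_neg hj0] at h))
      · by_cases hja : j ≤ a
        · rw [if_pos hja] at h; simp at h
        · rw [if_neg hja] at h
          by_cases hje : j = a + 1
          · rw [if_pos hje] at h; simp at h
          · rw [if_neg hje] at h; simp at h
      · by_cases hia : i ≤ a
        · rw [if_pos hia] at h; simp at h
        · rw [if_neg hia] at h
          by_cases hie : i = a + 1
          · rw [if_pos hie] at h; simp at h
          · rw [if_neg hie] at h; simp at h
      · by_cases hia : i ≤ a <;> by_cases hja : j ≤ a
        · rw [if_pos hia, if_pos hja] at h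
          simp only [Sum.inr.injEq] at h
          have := hmod2 (i-1) (j-1) (by omega) (by omega) (e.injective h)
          omega
        · rw [if_pos hia, if_neg hja] at h
          by_cases hje : j = a + 1
          · rw [if_pos hje] at h; simp at h
          · rw [if_neg hje] at h
            simp only [Sum.inr.injEq] at h
            exact absurd (e.injective h) (hdisj12 _ _)
        · rw [if_neg hia, if_pos hja] at h
          by_cases hie : i = a + 1
          · rw [if_pos hie] at h; simp at h
          · rw [if_neg hie] at h
            simp only [Sum.inr.injEq] at h
            exact absurd (e.injective h.symm) (hdisj12 _ _)
        · rw [if_neg hia, if_neg hja] at h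
          by_cases hie : i = a + 1 <;> by_cases hje : j = a + 1
          · omega
          · rw [if_pos hie, if_neg hje] at h; simp at h
          · rw [if_neg hie, if_pos hje] at h; simp at h
          · rw [if_neg hie, if_neg hje] at h
            simp only [Sum.inr.injEq] at h
            have := hmod3 (i-a-2) (j-a-2) (by omega) (by omega) (e.injective h)
            omega)
  have hu1 : q1 0 = Sum.inl 0 := by simp [hq1]
  have hu2 : q2 0 = Sum.inl 0 := by simp [hq2]
  refine ⟨Sum.inl 0, (c1.copy hu1 hu1), (c2.copy hu2 hu2), (c1.isCycle_copy hu1).mpr hc1,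
    (c2.isCycle_copy hu2).mpr hc2, by simpa using hlen1, by simpa using hlen2, ?_⟩
  intro v hv1 hv2
  rw [Walk.support_copy] at hv1 hv2
  obtain ⟨k, hk, rfl⟩ := hsup1 v hv1
  obtain ⟨m, hm, hqm⟩ := hsup2 _ hv2
  rcases Nat.eq_zero_or_pos k with rfl | hk0
  · exact hu1
  exfalso
  simp only [hq1] at hqm; rw [if_neg (by omega : ¬ k = 0)] at hqm
  simp only [hq2] at hqm
  by_cases hm0 : m = 0
  · rw [if_pos hm0] at hqm; simp at hqm
  rw [if_neg hm0] at hqm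
  by_cases hma : m ≤ a
  · rw [if_pos hma] at hqm
    simp only [Sum.inr.injEq] at hqm
    have := e.injective hqm
    simp only [hp0, hp1] at this
    simp only [Sigma.mk.inj_iff] at this
    exact absurd this.1 (by decide)
  rw [if_neg hma] at hqm
  by_cases hme : m = a + 1
  · rw [if_pos hme] at hqm; simp at hqm
  · rw [if_neg hme] at hqm
    simp only [Sum.inr.injEq] at hqm
    have := e.injective hqm
    simp only [hp0, hp2] at this
    simp only [Sigma.mk.inj_iff] at this
    exact absurd this.1 (by decide)
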